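/- Let T > 0, N ∈ ℕ, π ∈ (0,1), and λ₁, λ₂ > 0 with λ₁ ≠ λ₂. For each n ∈ ℕ set Λ₁(n) = π λ₁^{N+n} e^{−Tλ₁}, Λ₂(n) = (1−π) λ₂^{N+n} e^{−Tλ₂}, and define the vector v_n ∈ ℝ³ by v_n = ( Λ₁(n)/π − Λ₂(n)/(1−π), ((N+n)/λ₁ − T) Λ₁(n), ((N+n)/λ₂ − T) Λ₂(n) ). If a vector w ∈ ℝ³ satisfies ⟨w, v_n⟩ = 0 for every n ∈ ℕ, then w = 0. Equivalently, the family {v_n : n ∈ ℕ} spans ℝ³. -/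

import Mathlib

/-- **Key lemma for local identifiability of a two-component Poisson mixture.**
No nonzero vector `w ∈ ℝ³` annihilates all the gradient vectors
`v n = (Λ₁(n)/π − Λ₂(n)/(1−π), ((N+n)/λ₁ − T)Λ₁(n), ((N+n)/λ₂ − T)Λ₂(n))`,
where `Λ₁(n) = π λ₁^{N+n} e^{−Tλ₁}` and `Λ₂(n) = (1 − π) λ₂^{N+n} e^{−Tλ₂}`,
and `π ∈ (0,1)` is the mixture weight. -/
theorem poisson_mixture_gradients_annihilator_zero
    (T : ℝ) (hT : 0 < T) (N : ℕ) (pi : ℝ) (hpi : pi ∈ Set.Ioo (0 : ℝ) 1)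
    (lam₁ lam₂ : ℝ) (h₁ : 0 < lam₁) (h₂ : 0 < lam₂) (hne : lam₁ ≠ lam₂)
    (Λ₁ Λ₂ : ℕ → ℝ)
    (hΛ₁ : ∀ n, Λ₁ n = pi * lam₁ ^ (N + n) * Real.exp (-T * lam₁))
    (hΛ₂ : ∀ n, Λ₂ n = (1 - pi) * lam₂ ^ (N + n) * Real.exp (-T * lam₂))
    (v : ℕ → Fin 3 → ℝ)
    (hv : ∀ n, v n = ![Λ₁ n / pi - Λ₂ n / (1 - pi),
                       ((N + n : ℝ) / lam₁ - T) * Λ₁ n,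
                       ((N + n : ℝ) / lam₂ - T) * Λ₂ n])
    (w : Fin 3 → ℝ) (hw : ∀ n : ℕ, ∑ i, w i * v n i = 0) :
    w = 0 := by
  obtain ⟨hp0, hp1⟩ := hpi
  have hp1' : 0 < 1 - pi := by linarith
  have hpne : pi ≠ 0 := ne_of_gt hp0
  have hpne1 : (1:ℝ) - pi ≠ 0 := ne_of_gt hp1'
  have hl1 : lam₁ ≠ 0 := ne_of_gt h₁
  have hl2 : lam₂ ≠ 0 := ne_of_gt h₂
  have hE1 : 0 < lam₁ ^ N * Real.exp (-T * lam₁) :=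
    mul_pos (pow_pos h₁ N) (Real.exp_pos _)
  have hE2 : 0 < lam₂ ^ N * Real.exp (-T * lam₂) :=
    mul_pos (pow_pos h₂ N) (Real.exp_pos _)
  set E1 := lam₁ ^ N * Real.exp (-T * lam₁) with hE1def
  set E2 := lam₂ ^ N * Real.exp (-T * lam₂) with hE2def
  -- The annihilation equations, with denominators cleared:
  -- (a + b n) λ₁ⁿ + (c + d n) λ₂ⁿ = 0 for all n.
  set a := E1 * (w 0 * lam₁ + w 1 * pi * ((N : ℝ) - lam₁ * T)) * lam₂ with ha
  set b := E1 * w 1 * pi * lam₂ with hb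
  set c := E2 * (-(w 0) * lam₂ + w 2 * (1 - pi) * ((N : ℝ) - lam₂ * T)) * lam₁ with hc
  set d := E2 * w 2 * (1 - pi) * lam₁ with hd
  have key : ∀ n : ℕ, (a + b * n) * lam₁ ^ n + (c + d * n) * lam₂ ^ n = 0 := by
    intro n
    have h := hw n
    rw [hv n] at h
    simp only [Fin.sum_univ_three, Matrix.cons_val_zero, Matrix.cons_val_one,
      Matrix.head_cons, Matrix.cons_val_two, Matrix.tail_cons, hΛ₁, hΛ₂, pow_add] at h
    field_simp at h
    have h2 : pi * (1 - pi) * ((a + b * n) * lam₁ ^ n + (c + d * n) * lam₂ ^ n) = 0 := by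
      rw [ha, hb, hc, hd, hE1def, hE2def]
      simp only [neg_mul]
      linear_combination pi * (1 - pi) * h
    rcases mul_eq_zero.mp h2 with h3 | h3
    · exact absurd h3 (by positivity)
    · exact h3
  have k0 := key 0
  have k1 := key 1
  have k2 := key 2
  have k3 := key 3
  push_cast at k0 k1 k2 k3
  simp only [pow_zero, pow_one] at k0 k1 k2 k3
  have hd12 : lam₁ - lam₂ ≠ 0 := sub_ne_zero.mpr hne
  have hu1 : (lam₁ - lam₂) * (b * lam₁ - d * lam₂) = 0 := by
    linear_combination k2 - (lam₁ + lam₂) * k1 + lam₁ * lam₂ * k0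
  have hu2 : (lam₁ - lam₂) * (b * lam₁ * (2*lam₁ + lam₂) - d * lam₂ * (2*lam₂ + lam₁)) = 0 := by
    linear_combination k3 - (lam₁^2 + lam₁*lam₂ + lam₂^2) * k1 + (lam₁^2*lam₂ + lam₁*lam₂^2) * k0
  have hbd : b * lam₁ = d * lam₂ := by
    rcases mul_eq_zero.mp hu1 with h | h
    · exact absurd h hd12
    · linarith
  have hb0 : b = 0 := by
    rcases mul_eq_zero.mp hu2 with h | h
    · exact absurd h hd12
    · have h' : b * lam₁ * (lam₁ - lam₂) = 0 := by
        linear_combination h - (lam₁ + 2*lam₂) * hbd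
      rcases mul_eq_zero.mp h' with h2' | h2'
      · exact (mul_eq_zero.mp h2').resolve_right hl1
      · exact absurd h2' hd12
  have hd0 : d = 0 := by
    have h' : d * lam₂ = 0 := by rw [← hbd, hb0]; ring
    exact (mul_eq_zero.mp h').resolve_right hl2
  have ha0 : a = 0 := by
    have h' : a * (lam₁ - lam₂) = 0 := by
      linear_combination k1 - lam₂ * k0 - lam₁ * hb0 - lam₂ * hd0
    exact (mul_eq_zero.mp h').resolve_right hd12
  have hc0 : c = 0 := by linear_combination k0 - ha0
  have hw1 : w 1 = 0 := by
    have h' : E1 * w 1 * pi * lam₂ = 0 := by rw [← hb]; exact hb0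
    rcases mul_eq_zero.mp h' with h | h
    · rcases mul_eq_zero.mp h with h2' | h2'
      · rcases mul_eq_zero.mp h2' with h3' | h3'
        · exact absurd h3' (ne_of_gt hE1)
        · exact h3'
      · exact absurd h2' hpne
    · exact absurd h hl2
  have hw2 : w 2 = 0 := by
    have h' : E2 * w 2 * (1 - pi) * lam₁ = 0 := by rw [← hd]; exact hd0
    rcases mul_eq_zero.mp h' with h | h
    · rcases mul_eq_zero.mp h with h2' | h2'
      · rcases mul_eq_zero.mp h2' with h3' | h3'
        · exact absurd h3' (ne_of_gt hE2)
        · exact h3'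
      · exact absurd h2' hpne1
    · exact absurd h hl1
  have hw0 : w 0 = 0 := by
    have h' : E1 * (w 0 * lam₁ + w 1 * pi * ((N : ℝ) - lam₁ * T)) * lam₂ = 0 := by
      rw [← ha]; exact ha0
    rw [hw1] at h'
    have h2' : w 0 * lam₁ = 0 := by
      rcases mul_eq_zero.mp h' with h | h
      · rcases mul_eq_zero.mp h with h3' | h3'
        · exact absurd h3' (ne_of_gt hE1)
        · linarith [h3']
      · exact absurd h hl2
    exact (mul_eq_zero.mp h2').resolve_right hl1
  funext i
  fin_cases i <;> simp [hw0, hw1, hw2]
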